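/- Let T be a bounded linear operator on an infinite-dimensional complex Banach space. T satisfies property (Z_{Π_a}) if and only if T satisfies Browder's theorem (σ(T)\σ_W(T) = Π^0(T)) and Π_a(T) = Π^0(T). -/

import Mathlib

open Set

noncomputable section

namespace ZProps

variable {X : Type*} [NormedAddCommGroup X] [NormedSpace ℂ X] [CompleteSpace X]

/-- The spectrum of `T`. -/
def sp (T : X →L[ℂ] X) : Set ℂ := spectrum ℂ T

/-- The approximate point spectrum: `λ` such that `T - λ` is not bounded below. -/
def spa (T : X →L[ℂ] X) : Set ℂ :=
  {l | ¬ ∃ c > (0:ℝ), ∀ x : X, c * ‖x‖ ≤ ‖(T - l • 1) x‖}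

/-- The point spectrum (eigenvalues). -/
def spp (T : X →L[ℂ] X) : Set ℂ := {l | ∃ x : X, x ≠ 0 ∧ T x = l • x}

/-- Eigenvalues of finite multiplicity. -/
def spp0 (T : X →L[ℂ] X) : Set ℂ :=
  {l | l ∈ spp T ∧ FiniteDimensional ℂ (LinearMap.ker ((T - l • 1 : X →L[ℂ] X) : X →ₗ[ℂ] X))}

/-- Isolated points of a subset of `ℂ`. -/
def iso (A : Set ℂ) : Set ℂ :=
  {l | l ∈ A ∧ ∃ ε > (0:ℝ), ∀ μ ∈ A, μ ≠ l → ε ≤ ‖μ - l‖}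

def Ea (T : X →L[ℂ] X) : Set ℂ := iso (spa T) ∩ spp T
def Ea0 (T : X →L[ℂ] X) : Set ℂ := iso (spa T) ∩ spp0 T
def Efull (T : X →L[ℂ] X) : Set ℂ := iso (sp T) ∩ spp T
def E0 (T : X →L[ℂ] X) : Set ℂ := iso (sp T) ∩ spp0 T

/-- Fredholm operator: finite-dimensional kernel, closed range of finite codimension. -/
def IsFredholmOp (S : X →L[ℂ] X) : Prop :=
  FiniteDimensional ℂ (LinearMap.ker (S : X →ₗ[ℂ] X)) ∧
  FiniteDimensional ℂ (X ⧸ LinearMap.range (S : X →ₗ[ℂ] X)) ∧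
  IsClosed ((LinearMap.range (S : X →ₗ[ℂ] X) : Submodule ℂ X) : Set X)

/-- Weyl operator: Fredholm of index 0. -/
def IsWeylOp (S : X →L[ℂ] X) : Prop :=
  IsFredholmOp S ∧
  Module.finrank ℂ (LinearMap.ker (S : X →ₗ[ℂ] X)) = Module.finrank ℂ (X ⧸ LinearMap.range (S : X →ₗ[ℂ] X))

/-- Weyl spectrum. -/
def spW (T : X →L[ℂ] X) : Set ℂ := {l | ¬ IsWeylOp (T - l • 1)}

def HasFiniteAscent (S : X →L[ℂ] X) : Prop :=
  ∃ n : ℕ, LinearMap.ker ((S ^ n : X →L[ℂ] X) : X →ₗ[ℂ] X) = LinearMap.ker ((S ^ (n + 1) : X →L[ℂ] X) : X →ₗ[ℂ] X)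

def HasFiniteDescent (S : X →L[ℂ] X) : Prop :=
  ∃ n : ℕ, LinearMap.range ((S ^ n : X →L[ℂ] X) : X →ₗ[ℂ] X) = LinearMap.range ((S ^ (n + 1) : X →L[ℂ] X) : X →ₗ[ℂ] X)

/-- Ascent of an operator (junk value if infinite). -/
def ascent (S : X →L[ℂ] X) : ℕ :=
  sInf {n : ℕ | LinearMap.ker ((S ^ n : X →L[ℂ] X) : X →ₗ[ℂ] X) = LinearMap.ker ((S ^ (n + 1) : X →L[ℂ] X) : X →ₗ[ℂ] X)}

/-- Poles of the resolvent: spectral points where `T - λ` has finite ascent and descent. -/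
def poles (T : X →L[ℂ] X) : Set ℂ :=
  {l | l ∈ sp T ∧ HasFiniteAscent (T - l • 1) ∧ HasFiniteDescent (T - l • 1)}

/-- Poles of finite rank. -/
def poles0 (T : X →L[ℂ] X) : Set ℂ :=
  {l | l ∈ poles T ∧ FiniteDimensional ℂ (LinearMap.ker ((T - l • 1 : X →L[ℂ] X) : X →ₗ[ℂ] X))}

/-- Left poles: `λ ∈ σ_a(T)` with finite ascent `a = a(T-λ)` and `R((T-λ)^(a+1))` closed. -/
def leftPoles (T : X →L[ℂ] X) : Set ℂ :=
  {l | l ∈ spa T ∧ HasFiniteAscent (T - l • 1) ∧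
    IsClosed ((LinearMap.range ((((T - l • 1) ^ (ascent (T - l • 1) + 1) : X →L[ℂ] X)) : X →ₗ[ℂ] X) : Submodule ℂ X) : Set X)}

/-- Left poles of finite rank. -/
def leftPoles0 (T : X →L[ℂ] X) : Set ℂ :=
  {l | l ∈ leftPoles T ∧ FiniteDimensional ℂ (LinearMap.ker ((T - l • 1 : X →L[ℂ] X) : X →ₗ[ℂ] X))}

/-- A linear endomorphism of a normed space is Weyl (Fredholm of index 0). -/
def LMIsWeyl {V : Type*} [NormedAddCommGroup V] [Module ℂ V] (L : V →ₗ[ℂ] V) : Prop :=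
  FiniteDimensional ℂ (LinearMap.ker L) ∧
  FiniteDimensional ℂ (V ⧸ LinearMap.range L) ∧
  IsClosed ((LinearMap.range L : Submodule ℂ V) : Set V) ∧
  Module.finrank ℂ (LinearMap.ker L) = Module.finrank ℂ (V ⧸ LinearMap.range L)

lemma mapsTo_range_pow (S : X →L[ℂ] X) (n : ℕ) :
    ∀ x ∈ LinearMap.range ((S ^ n : X →L[ℂ] X) : X →ₗ[ℂ] X),
      S x ∈ LinearMap.range ((S ^ n : X →L[ℂ] X) : X →ₗ[ℂ] X) := by
  rintro x ⟨y, rfl⟩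
  exact ⟨S y, by
    have h : (S ^ n) * S = S * (S ^ n) := (Commute.refl S).pow_left n
    calc (S ^ n) (S y) = ((S ^ n) * S) y := rfl
    _ = (S * S ^ n) y := by rw [h]
    _ = S ((S ^ n) y) := rfl⟩

/-- B-Weyl operator: for some `n`, `R(S^n)` is closed and the restriction of `S` to
`R(S^n)` is a Weyl operator. -/
def IsBWeylOp (S : X →L[ℂ] X) : Prop :=
  ∃ n : ℕ, IsClosed ((LinearMap.range ((S ^ n : X →L[ℂ] X) : X →ₗ[ℂ] X) : Submodule ℂ X) : Set X) ∧
    LMIsWeyl ((S : X →ₗ[ℂ] X).restrict (mapsTo_range_pow S n))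

/-- B-Weyl spectrum. -/
def spBW (T : X →L[ℂ] X) : Set ℂ := {l | ¬ IsBWeylOp (T - l • 1)}

/-- Single-valued extension property at a point. -/
def HasSVEPAt (T : X →L[ℂ] X) (l : ℂ) : Prop :=
  ∀ U : Set ℂ, IsOpen U → l ∈ U → ∀ f : ℂ → X, AnalyticOnNhd ℂ f U →
    (∀ μ ∈ U, (T - μ • 1) (f μ) = 0) → ∀ μ ∈ U, f μ = 0

/-- Riesz operator: `R - μ` is Fredholm for every nonzero `μ`. -/
def IsRieszOp (R : X →L[ℂ] X) : Prop :=
  ∀ μ : ℂ, μ ≠ 0 → IsFredholmOp (R - μ • 1)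

/-- Property `(Z_{E_a})`. -/
def PropZEa (T : X →L[ℂ] X) : Prop := sp T \ spW T = Ea T

/-- Property `(Z_{Π_a})`. -/
def PropZPa (T : X →L[ℂ] X) : Prop := sp T \ spW T = leftPoles T

/-- Weyl's theorem. -/
def WeylThm (T : X →L[ℂ] X) : Prop := sp T \ spW T = E0 T

/-- Browder's theorem. -/
def BrowderThm (T : X →L[ℂ] X) : Prop := sp T \ spW T = poles0 T

/-- Property `(k)`. -/
def PropK (T : X →L[ℂ] X) : Prop := sp T \ spW T = Efull T

/-- Property `(gaw)`. -/
def PropGaw (T : X →L[ℂ] X) : Prop := sp T \ spBW T = Ea T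

/-- Property `(aw)`. -/
def PropAw (T : X →L[ℂ] X) : Prop := sp T \ spW T = Ea0 T

/-- Property `(Baw)`. -/
def PropBaw (T : X →L[ℂ] X) : Prop := sp T \ spBW T = Ea0 T

/-- Property `(gab)`. -/
def PropGab (T : X →L[ℂ] X) : Prop := sp T \ spBW T = leftPoles T

/-- Property `(ab)`. -/
def PropAb (T : X →L[ℂ] X) : Prop := sp T \ spW T = leftPoles0 T

end ZProps

end

namespace ZHelper
set_option linter.unusedSectionVars false
open Module LinearMap Submodule
section Alg
variable {K : Type*} [Field K] {V : Type*} [AddCommGroup V] [Module K V]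

lemma findim_of_piece (p : Submodule K V) [FiniteDimensional K p]
    [FiniteDimensional K (V ⧸ p)] : FiniteDimensional K V := by
  have h1 : IsNoetherian K ↥p := IsNoetherian.iff_fg.mpr ‹_›
  have h2 : IsNoetherian K (V ⧸ p) := IsNoetherian.iff_fg.mpr ‹_›
  exact IsNoetherian.iff_fg.mp ((isNoetherian_iff_submodule_quotient p).2 ⟨h1, h2⟩)

lemma findim_of_ker_range {W : Type*} [AddCommGroup W] [Module K W] (φ : V →ₗ[K] W)
    [FiniteDimensional K (ker φ)] (h : FiniteDimensional K (LinearMap.range φ)) :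
    FiniteDimensional K V := by
  have : FiniteDimensional K (V ⧸ ker φ) := (φ.quotKerEquivRange).symm.finiteDimensional
  exact findim_of_piece (ker φ)

lemma tower {q s : Submodule K V} (h : q ≤ s) [FiniteDimensional K (V ⧸ q)] :
    finrank K (V ⧸ q) = finrank K (V ⧸ s) + finrank K (s.map q.mkQ) := by
  have e := Submodule.quotientQuotientEquivQuotient q s h
  have h2 := Submodule.finrank_quotient_add_finrank (s.map q.mkQ)
  rw [e.finrank_eq] at h2
  omega

lemma finrank_map_mkQ (q s : Submodule K V) :
    finrank K (s.map q.mkQ) = finrank K (s ⧸ comap s.subtype q) := by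
  have hker : LinearMap.ker (q.mkQ.comp s.subtype) = comap s.subtype q := by
    rw [ker_comp, ker_mkQ]
  have hrg : LinearMap.range (q.mkQ.comp s.subtype) = s.map q.mkQ := by
    rw [LinearMap.range_comp, Submodule.range_subtype]
  have e := LinearMap.quotKerEquivRange (q.mkQ.comp s.subtype)
  rw [hker, hrg] at e
  exact e.finrank_eq.symm

lemma findim_ker_comp (f g : V →ₗ[K] V) [FiniteDimensional K (ker f)]
    [FiniteDimensional K (ker g)] : FiniteDimensional K (ker (g ∘ₗ f)) := by
  set φ : ↥(ker (g ∘ₗ f)) →ₗ[K] V := f.comp (ker (g ∘ₗ f)).subtype with hφ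
  have hkφ : ker φ = comap (ker (g ∘ₗ f)).subtype (ker f) := LinearMap.ker_comp _ _
  have : FiniteDimensional K (ker φ) := by
    rw [hkφ]
    exact (Submodule.comapSubtypeEquivOfLe (LinearMap.ker_le_ker_comp f g)).symm.finiteDimensional
  have hrφ : LinearMap.range φ = LinearMap.range f ⊓ ker g := by
    rw [hφ, LinearMap.range_comp, Submodule.range_subtype, LinearMap.ker_comp, Submodule.map_comap_eq]
  have : FiniteDimensional K (LinearMap.range φ) := by
    rw [hrφ]; exact Submodule.finiteDimensional_of_le inf_le_right
  exact findim_of_ker_range φ this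

lemma eq1 (f g : V →ₗ[K] V) [FiniteDimensional K (ker f)] [FiniteDimensional K (ker g)] :
    finrank K (ker (g ∘ₗ f)) =
      finrank K ((LinearMap.range f ⊓ ker g : Submodule K V)) + finrank K (ker f) := by
  have : FiniteDimensional K (ker (g ∘ₗ f)) := findim_ker_comp f g
  set φ : ↥(ker (g ∘ₗ f)) →ₗ[K] V := f.comp (ker (g ∘ₗ f)).subtype with hφ
  have h := LinearMap.finrank_range_add_finrank_ker φ
  have hkφ : ker φ = comap (ker (g ∘ₗ f)).subtype (ker f) := LinearMap.ker_comp _ _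
  have hrφ : LinearMap.range φ = LinearMap.range f ⊓ ker g := by
    rw [hφ, LinearMap.range_comp, Submodule.range_subtype, LinearMap.ker_comp, Submodule.map_comap_eq]
  rw [hkφ, hrφ,
    (Submodule.comapSubtypeEquivOfLe (LinearMap.ker_le_ker_comp f g)).finrank_eq] at h
  omega


lemma eq2 (f g : V →ₗ[K] V) [FiniteDimensional K (ker g)] :
    finrank K (ker g) = finrank K ((LinearMap.range f ⊓ ker g : Submodule K V)) +
      finrank K ((ker g ⊔ LinearMap.range f : Submodule K V).map (LinearMap.range f).mkQ) := by
  set p := ker g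
  set q := LinearMap.range f
  have h := Submodule.finrank_quotient_add_finrank (comap p.subtype (p ⊓ q))
  -- h : finrank (p ⧸ c) + finrank c = finrank p
  have h1 : finrank K (comap p.subtype (p ⊓ q)) = finrank K ((q ⊓ p : Submodule K V)) := by
    rw [(Submodule.comapSubtypeEquivOfLe (inf_le_left : p ⊓ q ≤ p)).finrank_eq, inf_comm]
  have h2 : finrank K (↥p ⧸ comap p.subtype (p ⊓ q)) =
      finrank K ((p ⊔ q : Submodule K V).map q.mkQ) := by
    rw [Submodule.comap_inf, (LinearMap.quotientInfEquivSupQuotient p q).finrank_eq, finrank_map_mkQ q (p ⊔ q)]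
  rw [h1, h2] at h
  omega

lemma eq3 (f g : V →ₗ[K] V) [FiniteDimensional K (V ⧸ LinearMap.range f)] :
    finrank K (V ⧸ LinearMap.range f) =
      finrank K (V ⧸ (ker g ⊔ LinearMap.range f : Submodule K V)) +
      finrank K ((ker g ⊔ LinearMap.range f : Submodule K V).map (LinearMap.range f).mkQ) :=
  tower le_sup_right

lemma range_comp_le (f g : V →ₗ[K] V) : LinearMap.range (g ∘ₗ f) ≤ LinearMap.range g := by
  rw [LinearMap.range_comp]; exact LinearMap.map_le_range

lemma ker_mkQ_comp (f g : V →ₗ[K] V) :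
    ker ((LinearMap.range (g ∘ₗ f)).mkQ.comp g) = ker g ⊔ LinearMap.range f := by
  ext x
  simp only [mem_ker, LinearMap.comp_apply, Submodule.mkQ_apply, Submodule.Quotient.mk_eq_zero]
  constructor
  · rintro ⟨y, hy⟩
    have : x - f y ∈ ker g := by
      simp only [mem_ker, map_sub, ← LinearMap.comp_apply g f, hy, sub_self]
    have hx : x = (x - f y) + f y := by abel
    rw [hx]
    exact Submodule.add_mem_sup this (LinearMap.mem_range_self f y)
  · intro hx
    rcases Submodule.mem_sup.1 hx with ⟨k, hk, r, hr, rfl⟩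
    rcases hr with ⟨y, rfl⟩
    refine ⟨y, ?_⟩
    simp only [map_add, LinearMap.comp_apply]
    rw [mem_ker.1 hk, zero_add]

lemma map_mkQ_range_eq (f g : V →ₗ[K] V) :
    (LinearMap.range g).map (LinearMap.range (g ∘ₗ f)).mkQ =
      LinearMap.range ((LinearMap.range (g ∘ₗ f)).mkQ.comp g) :=
  (LinearMap.range_comp _ _).symm

lemma findim_coker_comp (f g : V →ₗ[K] V) [FiniteDimensional K (V ⧸ LinearMap.range f)]
    [FiniteDimensional K (V ⧸ LinearMap.range g)] :
    FiniteDimensional K (V ⧸ LinearMap.range (g ∘ₗ f)) := by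
  set r := LinearMap.range (g ∘ₗ f)
  set t := LinearMap.range g
  have hrt : r ≤ t := range_comp_le f g
  set ψ : (V ⧸ r) →ₗ[K] V ⧸ t := r.liftQ t.mkQ (by rw [Submodule.ker_mkQ]; exact hrt)
  have hkψ : ker ψ = t.map r.mkQ := by
    rw [Submodule.ker_liftQ, Submodule.ker_mkQ]
  -- t.map r.mkQ is the LinearMap.range of a map from V ⧸ LinearMap.range f
  have hle : LinearMap.range f ≤ ker (r.mkQ.comp g) := by
    rw [ker_mkQ_comp f g]; exact le_sup_right
  set hbar : (V ⧸ LinearMap.range f) →ₗ[K] V ⧸ r := (LinearMap.range f).liftQ (r.mkQ.comp g) hle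
  have hrh : LinearMap.range hbar = t.map r.mkQ := by
    rw [Submodule.range_liftQ, ← map_mkQ_range_eq]
  have hfk : FiniteDimensional K (ker ψ) := by
    rw [hkψ, ← hrh]; infer_instance
  have hfr : FiniteDimensional K (LinearMap.range ψ) := inferInstance
  exact findim_of_ker_range ψ hfr

lemma eq4 (f g : V →ₗ[K] V) [FiniteDimensional K (V ⧸ LinearMap.range f)]
    [FiniteDimensional K (V ⧸ LinearMap.range g)] :
    finrank K (V ⧸ LinearMap.range (g ∘ₗ f)) = finrank K (V ⧸ LinearMap.range g) +
      finrank K ((LinearMap.range g).map (LinearMap.range (g ∘ₗ f)).mkQ) := by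
  have : FiniteDimensional K (V ⧸ LinearMap.range (g ∘ₗ f)) := findim_coker_comp f g
  exact tower (range_comp_le f g)

lemma eq5 (f g : V →ₗ[K] V) :
    finrank K ((LinearMap.range g).map (LinearMap.range (g ∘ₗ f)).mkQ) =
      finrank K (V ⧸ (ker g ⊔ LinearMap.range f : Submodule K V)) := by
  have e := LinearMap.quotKerEquivRange ((LinearMap.range (g ∘ₗ f)).mkQ.comp g)
  rw [ker_mkQ_comp f g] at e
  rw [map_mkQ_range_eq f g, ← e.finrank_eq]

lemma index_additivity (f g : V →ₗ[K] V) [FiniteDimensional K (ker f)]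
    [FiniteDimensional K (ker g)] [FiniteDimensional K (V ⧸ LinearMap.range f)]
    [FiniteDimensional K (V ⧸ LinearMap.range g)] :
    finrank K (ker (g ∘ₗ f)) + finrank K (V ⧸ LinearMap.range g) +
      finrank K (V ⧸ LinearMap.range f) =
    finrank K (ker f) + finrank K (ker g) + finrank K (V ⧸ LinearMap.range (g ∘ₗ f)) := by
  have h1 := eq1 f g
  have h2 := eq2 f g
  have h3 := eq3 f g
  have h4 := eq4 f g
  have h5 := eq5 f g
  omega



section Pow
variable (f : V →ₗ[K] V)

lemma pow_succ_comp (n : ℕ) : f ^ (n + 1) = (f ^ n) ∘ₗ f := by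
  rw [pow_succ, Module.End.mul_eq_comp]

lemma pow_succ_comp' (n : ℕ) : f ^ (n + 1) = f ∘ₗ (f ^ n) := by
  rw [pow_succ', Module.End.mul_eq_comp]

lemma ker_pow_mono {m n : ℕ} (h : m ≤ n) : ker (f ^ m) ≤ ker (f ^ n) := by
  obtain ⟨k, rfl⟩ := Nat.exists_eq_add_of_le h
  clear h
  induction k with
  | zero => simp
  | succ k ih =>
    refine le_trans ih ?_
    rw [← Nat.add_assoc, pow_succ_comp']
    exact LinearMap.ker_le_ker_comp (f ^ (m + k)) f

lemma range_pow_anti {m n : ℕ} (h : m ≤ n) : LinearMap.range (f ^ n) ≤ LinearMap.range (f ^ m) := by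
  obtain ⟨k, rfl⟩ := Nat.exists_eq_add_of_le h
  clear h
  induction k with
  | zero => simp
  | succ k ih =>
    refine le_trans ?_ ih
    rw [← Nat.add_assoc, pow_succ_comp]
    exact range_comp_le f (f ^ (m + k))

lemma range_pow_succ_eq_map (n : ℕ) :
    LinearMap.range (f ^ (n + 1)) = (LinearMap.range (f ^ n)).map f := by
  rw [pow_succ_comp', LinearMap.range_comp]

lemma ker_pow_stab {n : ℕ} (h : ker (f ^ n) = ker (f ^ (n + 1))) :
    ∀ k, ker (f ^ (n + k)) = ker (f ^ n) := by
  intro k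
  induction k with
  | zero => rfl
  | succ k ih =>
    refine le_antisymm ?_ (ker_pow_mono f (by omega))
    intro x hx
    have hfx : f x ∈ ker (f ^ (n + k)) := by
      rw [mem_ker] at hx ⊢
      have : (f ^ (n + k + 1)) x = (f ^ (n + k)) (f x) := by
        rw [pow_succ_comp]; rfl
      rw [← this]; exact hx
    rw [ih] at hfx
    have : x ∈ ker (f ^ (n + 1)) := by
      rw [mem_ker] at hfx ⊢
      have : (f ^ (n + 1)) x = (f ^ n) (f x) := by rw [pow_succ_comp]; rfl
      rw [this, hfx]
    rw [← h] at this
    exact this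

lemma range_pow_stab {n : ℕ} (h : LinearMap.range (f ^ n) = LinearMap.range (f ^ (n + 1))) :
    ∀ k, LinearMap.range (f ^ (n + k)) = LinearMap.range (f ^ n) := by
  intro k
  induction k with
  | zero => rfl
  | succ k ih =>
    have e : n + (k + 1) = (n + k) + 1 := rfl
    rw [e, range_pow_succ_eq_map f (n+k), ih, ← range_pow_succ_eq_map, ← h]

lemma findim_ker_pow [FiniteDimensional K (ker f)] (n : ℕ) :
    FiniteDimensional K (ker (f ^ n)) := by
  induction n with
  | zero => rw [pow_zero, Module.End.one_eq_id, LinearMap.ker_id]; infer_instance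
  | succ n ih =>
    rw [pow_succ_comp]
    exact findim_ker_comp f (f ^ n)

lemma findim_coker_pow [FiniteDimensional K (V ⧸ LinearMap.range f)] (n : ℕ) :
    FiniteDimensional K (V ⧸ LinearMap.range (f ^ n)) := by
  induction n with
  | zero =>
    rw [pow_zero, Module.End.one_eq_id, LinearMap.range_id]
    have : Subsingleton (V ⧸ (⊤ : Submodule K V)) := Submodule.Quotient.subsingleton_iff.mpr rfl
    exact Module.Finite.of_surjective (0 : (Fin 0 → K) →ₗ[K] V ⧸ (⊤ : Submodule K V))
      (fun x => ⟨0, Subsingleton.elim _ _⟩)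
  | succ n ih =>
    rw [pow_succ_comp]
    exact findim_coker_comp f (f ^ n)

lemma pow_index_zero [FiniteDimensional K (ker f)] [FiniteDimensional K (V ⧸ LinearMap.range f)]
    (h0 : finrank K (ker f) = finrank K (V ⧸ LinearMap.range f)) (n : ℕ) :
    finrank K (ker (f ^ n)) = finrank K (V ⧸ LinearMap.range (f ^ n)) := by
  induction n with
  | zero =>
    rw [pow_zero, Module.End.one_eq_id, LinearMap.ker_id, LinearMap.range_id]
    have : Subsingleton (V ⧸ (⊤ : Submodule K V)) := Submodule.Quotient.subsingleton_iff.mpr rfl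
    rw [finrank_bot, finrank_zero_of_subsingleton]
  | succ n ih =>
    have i1 : FiniteDimensional K (ker (f ^ n)) := findim_ker_pow f n
    have i2 : FiniteDimensional K (V ⧸ LinearMap.range (f ^ n)) := findim_coker_pow f n
    have h := index_additivity f (f ^ n)
    rw [← pow_succ_comp] at h
    omega

end Pow



lemma quot_finrank_eq_of_le {q s : Submodule K V} (hle : q ≤ s)
    [FiniteDimensional K (V ⧸ q)]
    (h : finrank K (V ⧸ q) = finrank K (V ⧸ s)) : q = s := by
  have ht := tower hle
  have hfd : FiniteDimensional K (s.map q.mkQ) := inferInstance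
  have hz : finrank K (s.map q.mkQ) = 0 := by omega
  have hb : s.map q.mkQ = ⊥ := Submodule.finrank_eq_zero.mp hz
  refine le_antisymm hle ?_
  intro x hx
  have : q.mkQ x ∈ s.map q.mkQ := Submodule.mem_map_of_mem hx
  rw [hb, Submodule.mem_bot] at this
  rwa [Submodule.mkQ_apply, Submodule.Quotient.mk_eq_zero] at this

lemma descent_of_weyl_ascent (f : V →ₗ[K] V) [FiniteDimensional K (ker f)]
    [FiniteDimensional K (V ⧸ LinearMap.range f)]
    (h0 : finrank K (ker f) = finrank K (V ⧸ LinearMap.range f)) {n : ℕ}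
    (hk : ker (f ^ n) = ker (f ^ (n + 1))) :
    LinearMap.range (f ^ n) = LinearMap.range (f ^ (n + 1)) := by
  have i1 : FiniteDimensional K (V ⧸ LinearMap.range (f ^ (n+1))) := findim_coker_pow f (n+1)
  have e1 := pow_index_zero f h0 n
  have e2 := pow_index_zero f h0 (n + 1)
  have hdk : finrank K (ker (f ^ n)) = finrank K (ker (f ^ (n+1))) := by rw [hk]
  exact (quot_finrank_eq_of_le (range_pow_anti f (Nat.le_add_right n 1)) (by omega)).symm



section Pole
variable (f : V →ₗ[K] V) {P : ℕ}

lemma pole_disjoint (hK : ∀ m, P ≤ m → ker (f ^ m) = ker (f ^ P)) :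
    Disjoint (ker (f ^ P)) (LinearMap.range (f ^ P)) := by
  rw [Submodule.disjoint_def]
  rintro x hxk ⟨y, rfl⟩
  have h2 : y ∈ ker (f ^ (P + P)) := by
    rw [mem_ker, pow_add, Module.End.mul_apply]
    exact mem_ker.1 hxk
  rw [hK (P + P) (Nat.le_add_right P P)] at h2
  exact mem_ker.1 h2

lemma pole_codisjoint (hR : ∀ m, P ≤ m → LinearMap.range (f ^ m) = LinearMap.range (f ^ P)) :
    ker (f ^ P) ⊔ LinearMap.range (f ^ P) = ⊤ := by
  rw [eq_top_iff]
  intro x _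
  have hx : (f ^ P) x ∈ LinearMap.range (f ^ (P + P)) := by
    rw [hR (P + P) (Nat.le_add_right P P)]
    exact LinearMap.mem_range_self _ x
  obtain ⟨y, hy⟩ := hx
  have hk : x - (f ^ P) y ∈ ker (f ^ P) := by
    rw [mem_ker, map_sub, sub_eq_zero]
    rw [pow_add, Module.End.mul_apply] at hy
    exact hy.symm
  have : x = (x - (f ^ P) y) + (f ^ P) y := by abel
  rw [this]
  exact Submodule.add_mem_sup hk (LinearMap.mem_range_self _ y)

lemma findim_quot_of_sup_top (p s : Submodule K V) [FiniteDimensional K p]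
    (h : p ⊔ s = ⊤) : FiniteDimensional K (V ⧸ s) := by
  have hsurj : Function.Surjective (s.mkQ.comp p.subtype) := by
    intro z
    obtain ⟨x, rfl⟩ := s.mkQ_surjective z
    have hx : x ∈ p ⊔ s := by rw [h]; trivial
    obtain ⟨a, ha, b, hb, rfl⟩ := Submodule.mem_sup.1 hx
    refine ⟨⟨a, ha⟩, ?_⟩
    simp only [LinearMap.comp_apply, Submodule.coe_subtype, Submodule.mkQ_apply]
    rw [Submodule.Quotient.eq]
    simpa using neg_mem hb
  exact Module.Finite.of_surjective (s.mkQ.comp p.subtype) hsurj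

variable [FiniteDimensional K (ker f)]

lemma pole_findim_coker (hP : 1 ≤ P)
    (hK : ∀ m, P ≤ m → ker (f ^ m) = ker (f ^ P))
    (hR : ∀ m, P ≤ m → LinearMap.range (f ^ m) = LinearMap.range (f ^ P))
    (m : ℕ) (hm : 1 ≤ m) : FiniteDimensional K (V ⧸ LinearMap.range (f ^ m)) := by
  have i1 : FiniteDimensional K (ker (f ^ P)) := findim_ker_pow f P
  have hle : LinearMap.range (f ^ P) ≤ LinearMap.range (f ^ m) := by
    rcases le_or_gt m P with h | h
    · exact range_pow_anti f h
    · rw [hR m h.le]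
  refine findim_quot_of_sup_top (ker (f ^ P)) _ ?_
  rw [eq_top_iff, ← pole_codisjoint f hR]
  exact sup_le_sup_left hle _

lemma map_pow_le_ker (hK : ∀ m, P ≤ m → ker (f ^ m) = ker (f ^ P)) :
    ∀ x ∈ ker (f ^ P), f x ∈ ker (f ^ P) := by
  intro x hx
  have : x ∈ ker (f ^ (P + 1)) := by rw [hK (P+1) (Nat.le_add_right P 1)]; exact hx
  rw [mem_ker] at this ⊢
  have h2 : (f ^ P) (f x) = (f ^ (P + 1)) x := by rw [pow_succ_comp]; rfl
  rw [h2, this]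

lemma ker_le_ker_pow (hP : 1 ≤ P) : ker f ≤ ker (f ^ P) := by
  have : ker (f ^ 1) ≤ ker (f ^ P) := ker_pow_mono f hP
  simpa using this

lemma pole_index_zero (hP : 1 ≤ P)
    (hK : ∀ m, P ≤ m → ker (f ^ m) = ker (f ^ P))
    (hR : ∀ m, P ≤ m → LinearMap.range (f ^ m) = LinearMap.range (f ^ P)) :
    finrank K (V ⧸ LinearMap.range f) = finrank K (ker f) := by
  classical
  set N := ker (f ^ P) with hN
  have i1 : FiniteDimensional K N := findim_ker_pow f P
  have icoker : FiniteDimensional K (V ⧸ LinearMap.range f) := by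
    have := pole_findim_coker f hP hK hR 1 le_rfl
    rw [pow_one] at this; exact this
  -- θ : N → V ⧸ LinearMap.range f is surjective
  set θ : N →ₗ[K] V ⧸ LinearMap.range f := (LinearMap.range f).mkQ.comp N.subtype with hθ
  have hRle : LinearMap.range (f ^ P) ≤ LinearMap.range f := by
    have : LinearMap.range (f ^ P) ≤ LinearMap.range (f ^ 1) := range_pow_anti f hP
    simpa using this
  have hsurj : Function.Surjective θ := by
    intro z
    obtain ⟨x, rfl⟩ := (LinearMap.range f).mkQ_surjective z
    have hx : x ∈ N ⊔ LinearMap.range (f ^ P) := by rw [pole_codisjoint f hR]; trivial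
    obtain ⟨a, ha, b, hb, rfl⟩ := Submodule.mem_sup.1 hx
    refine ⟨⟨a, ha⟩, ?_⟩
    simp only [hθ, LinearMap.comp_apply, Submodule.coe_subtype, Submodule.mkQ_apply]
    rw [Submodule.Quotient.eq]
    simpa using neg_mem (hRle hb)
  have hrn := LinearMap.finrank_range_add_finrank_ker θ
  have hrtop : finrank K (LinearMap.range θ) = finrank K (V ⧸ LinearMap.range f) := by
    rw [LinearMap.range_eq_top.mpr hsurj, finrank_top]
  -- ker θ ≃ N ⊓ LinearMap.range f
  have hkθ : ker θ = comap N.subtype (LinearMap.range f) := by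
    rw [hθ, ker_comp, ker_mkQ]
  have hcomap : comap N.subtype (LinearMap.range f) = comap N.subtype (N ⊓ LinearMap.range f) := by
    ext x; simp [x.2]
  have hkerθ : finrank K (ker θ) = finrank K ((N ⊓ LinearMap.range f : Submodule K V)) := by
    rw [hkθ, hcomap, (Submodule.comapSubtypeEquivOfLe (inf_le_left : N ⊓ LinearMap.range f ≤ N)).finrank_eq]
  -- N ⊓ LinearMap.range f = map f N
  have hmapN : N ⊓ LinearMap.range f = N.map f := by
    apply le_antisymm
    · rintro k ⟨hkN, x, rfl⟩
      have hx : x ∈ N ⊔ LinearMap.range (f ^ P) := by rw [pole_codisjoint f hR]; trivial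
      obtain ⟨a, ha, b, hb, rfl⟩ := Submodule.mem_sup.1 hx
      have hfa : f a ∈ N := map_pow_le_ker f hK a ha
      have hfbR : f b ∈ LinearMap.range (f ^ P) := by
        obtain ⟨y, rfl⟩ := hb
        have h1 : f ((f ^ P) y) = (f ^ (P + 1)) y := by rw [pow_succ_comp']; rfl
        rw [h1, ← hR (P + 1) (Nat.le_add_right P 1)]
        exact LinearMap.mem_range_self _ y
      have hfbN : f b ∈ N := by
        have : f b = f (a + b) - f a := by rw [map_add]; abel
        rw [this]; exact Submodule.sub_mem _ hkN hfa
      have hfb0 : f b = 0 := (Submodule.disjoint_def.mp (pole_disjoint f hK)) _ hfbN hfbR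
      have : f (a + b) = f a := by rw [map_add, hfb0, add_zero]
      rw [this]
      exact Submodule.mem_map_of_mem ha
    · rintro k ⟨x, hx, rfl⟩
      exact ⟨map_pow_le_ker f hK x hx, LinearMap.mem_range_self f x⟩
  -- restriction of f to N
  set g : N →ₗ[K] N := f.restrict (map_pow_le_ker f hK) with hg
  have hgrn := LinearMap.finrank_range_add_finrank_ker g
  have hkerg : finrank K (ker g) = finrank K (ker f) := by
    rw [hg, LinearMap.ker_restrict,
      (Submodule.comapSubtypeEquivOfLe (ker_le_ker_pow f hP)).finrank_eq]
  have hrangeg : finrank K (LinearMap.range g) = finrank K (N.map f) := by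
    have hmap : (LinearMap.range g).map N.subtype = N.map f := by
      ext z
      simp only [Submodule.mem_map, LinearMap.mem_range]
      constructor
      · rintro ⟨w, ⟨x, rfl⟩, rfl⟩
        exact ⟨x, x.2, rfl⟩
      · rintro ⟨x, hx, rfl⟩
        exact ⟨g ⟨x, hx⟩, ⟨⟨x, hx⟩, rfl⟩, rfl⟩
    rw [← hmap]
    exact (Submodule.equivMapOfInjective N.subtype (Submodule.injective_subtype N)
      (LinearMap.range g)).finrank_eq
  have hfin : finrank K ((N ⊓ LinearMap.range f : Submodule K V)) = finrank K (N.map f) := by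
    rw [hmapN]
  omega

end Pole

end Alg

end ZHelper

namespace ZHelper
open Module LinearMap Submodule ZProps

variable {X : Type*} [NormedAddCommGroup X] [NormedSpace ℂ X] [CompleteSpace X]

lemma closed_range_of_findim_coker (A : X →L[ℂ] X)
    (h : FiniteDimensional ℂ (X ⧸ LinearMap.range (A : X →ₗ[ℂ] X))) :
    IsClosed ((LinearMap.range (A : X →ₗ[ℂ] X) : Submodule ℂ X) : Set X) := by
  obtain ⟨F, hF⟩ := Submodule.exists_isCompl (LinearMap.range (A : X →ₗ[ℂ] X) : Submodule ℂ X)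
  have hFfin : FiniteDimensional ℂ F :=
    (Submodule.quotientEquivOfIsCompl _ F hF).finiteDimensional
  have : CompleteSpace F := FiniteDimensional.complete ℂ F
  -- Ψ : X × F → X
  set Ψ : X × F →L[ℂ] X :=
    A.comp (ContinuousLinearMap.fst ℂ X F) + F.subtypeL.comp (ContinuousLinearMap.snd ℂ X F)
    with hΨ
  have hΨapp : ∀ p : X × F, Ψ p = A p.1 + (p.2 : X) := fun p => rfl
  have hsurj : Function.Surjective Ψ := by
    intro y
    have hy : y ∈ LinearMap.range (A : X →ₗ[ℂ] X) ⊔ F := by rw [hF.sup_eq_top]; trivial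
    obtain ⟨a, ⟨x, rfl⟩, b, hb, rfl⟩ := Submodule.mem_sup.1 hy
    exact ⟨(x, ⟨b, hb⟩), rfl⟩
  have hopen : IsOpenMap Ψ := Ψ.isOpenMap hsurj
  -- the closed subspace C = X × {0}
  set C : Set (X × F) := {p | p.2 = 0} with hC
  have hCclosed : IsClosed C := isClosed_eq (by fun_prop) continuous_const
  have himg : Ψ '' C = (LinearMap.range (A : X →ₗ[ℂ] X) : Submodule ℂ X) := by
    apply Set.Subset.antisymm
    · rintro _ ⟨⟨x, f⟩, hf, rfl⟩
      have : f = 0 := hf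
      rw [hΨapp]
      simp only [this, Submodule.coe_zero, add_zero, SetLike.mem_coe]
      exact LinearMap.mem_range_self _ x
    · rintro _ ⟨x, rfl⟩
      exact ⟨(x, 0), rfl, by rw [hΨapp]; simp⟩
  have hker : ∀ p : X × F, Ψ p = 0 → p.2 = 0 := by
    intro p hp
    rw [hΨapp] at hp
    have h1 : (p.2 : X) ∈ LinearMap.range (A : X →ₗ[ℂ] X) ⊓ F := by
      constructor
      · refine ⟨-p.1, ?_⟩
        rw [map_neg]
        rw [add_eq_zero_iff_neg_eq] at hp
        exact hp
      · exact p.2.2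
    rw [hF.inf_eq_bot] at h1
    exact Subtype.ext h1
  have hcompl : Ψ '' Cᶜ = (Ψ '' C)ᶜ := by
    apply Set.Subset.antisymm
    · rintro _ ⟨p, hp, rfl⟩
      intro hmem
      obtain ⟨q, hq, heq⟩ := hmem
      have : Ψ (p - q) = 0 := by rw [map_sub, heq, sub_self]
      have h2 := hker _ this
      have : p.2 = q.2 := by
        have h3 : p.2 - q.2 = 0 := h2
        exact sub_eq_zero.mp h3
      exact hp (by rw [hC, Set.mem_setOf_eq, this]; exact hq)
    · intro y hy
      obtain ⟨p, rfl⟩ := hsurj y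
      exact ⟨p, fun hp => hy ⟨p, hp, rfl⟩, rfl⟩
  have hopen2 : IsOpen ((Ψ '' C)ᶜ) := by rw [← hcompl]; exact hopen _ hCclosed.isOpen_compl
  rw [← himg]
  rw [← isOpen_compl_iff]
  exact hopen2

lemma clm_coe_pow (S : X →L[ℂ] X) (n : ℕ) :
    ((S ^ n : X →L[ℂ] X) : X →ₗ[ℂ] X) = ((S : X →ₗ[ℂ] X)) ^ n := by
  induction n with
  | zero => rfl
  | succ n ih => rw [pow_succ, pow_succ, ← ih]; rfl

lemma clm_ker_pow (S : X →L[ℂ] X) (n : ℕ) :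
    LinearMap.ker ((S ^ n : X →L[ℂ] X) : X →ₗ[ℂ] X) = LinearMap.ker (((S : X →ₗ[ℂ] X)) ^ n) := by
  rw [← clm_coe_pow]

lemma clm_range_pow (S : X →L[ℂ] X) (n : ℕ) :
    LinearMap.range ((S ^ n : X →L[ℂ] X) : X →ₗ[ℂ] X) = LinearMap.range (((S : X →ₗ[ℂ] X)) ^ n) := by
  rw [← clm_coe_pow]

-- normalized stabilization data
lemma ker_stab_all (f : X →ₗ[ℂ] X) {a : ℕ} (ha : ker (f ^ a) = ker (f ^ (a + 1)))
    {P : ℕ} (haP : a ≤ P) : ∀ m, P ≤ m → ker (f ^ m) = ker (f ^ P) := by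
  have h1 : ∀ m, a ≤ m → ker (f ^ m) = ker (f ^ a) := by
    intro m hm
    obtain ⟨k, rfl⟩ := Nat.exists_eq_add_of_le hm
    exact ker_pow_stab f ha k
  intro m hm
  rw [h1 m (le_trans haP hm), h1 P haP]

lemma range_stab_all (f : X →ₗ[ℂ] X) {b : ℕ}
    (hb : LinearMap.range (f ^ b) = LinearMap.range (f ^ (b + 1)))
    {P : ℕ} (hbP : b ≤ P) :
    ∀ m, P ≤ m → LinearMap.range (f ^ m) = LinearMap.range (f ^ P) := by
  have h1 : ∀ m, b ≤ m → LinearMap.range (f ^ m) = LinearMap.range (f ^ b) := by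
    intro m hm
    obtain ⟨k, rfl⟩ := Nat.exists_eq_add_of_le hm
    exact range_pow_stab f hb k
  intro m hm
  rw [h1 m (le_trans hbP hm), h1 P hbP]

/-- Weyl + finite ascent implies finite descent. -/
lemma weyl_descent (S : X →L[ℂ] X) (hW : IsWeylOp S) (hA : HasFiniteAscent S) :
    HasFiniteDescent S := by
  obtain ⟨⟨hk, hc, -⟩, hidx⟩ := hW
  obtain ⟨n, hn⟩ := hA
  set f : X →ₗ[ℂ] X := (S : X →ₗ[ℂ] X) with hf
  have hkf : FiniteDimensional ℂ (ker f) := hk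
  have hcf : FiniteDimensional ℂ (X ⧸ LinearMap.range f) := hc
  have hidxf : finrank ℂ (ker f) = finrank ℂ (X ⧸ LinearMap.range f) := hidx
  rw [clm_ker_pow, clm_ker_pow] at hn
  refine ⟨n, ?_⟩
  rw [clm_range_pow, clm_range_pow]
  exact descent_of_weyl_ascent f hidxf hn

/-- data extracted from a pole: stabilization at some `P ≥ 1`. -/
lemma pole_data (S : X →L[ℂ] X) (hA : HasFiniteAscent S) (hD : HasFiniteDescent S) :
    ∃ P : ℕ, 1 ≤ P ∧
      (∀ m, P ≤ m → ker (((S : X →ₗ[ℂ] X)) ^ m) = ker (((S : X →ₗ[ℂ] X)) ^ P)) ∧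
      (∀ m, P ≤ m →
        LinearMap.range (((S : X →ₗ[ℂ] X)) ^ m) = LinearMap.range (((S : X →ₗ[ℂ] X)) ^ P)) := by
  obtain ⟨a, ha⟩ := hA
  obtain ⟨b, hb⟩ := hD
  rw [clm_ker_pow, clm_ker_pow] at ha
  rw [clm_range_pow, clm_range_pow] at hb
  refine ⟨max a b + 1, by omega, ?_, ?_⟩
  · exact ker_stab_all _ ha (by omega)
  · exact range_stab_all _ hb (by omega)

/-- finite ascent + finite descent + finite-dimensional kernel implies Weyl. -/
lemma weyl_of_pole (S : X →L[ℂ] X) (hA : HasFiniteAscent S) (hD : HasFiniteDescent S)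
    (hk : FiniteDimensional ℂ (LinearMap.ker (S : X →ₗ[ℂ] X))) : IsWeylOp S := by
  obtain ⟨P, hP, hK, hR⟩ := pole_data S hA hD
  set f : X →ₗ[ℂ] X := (S : X →ₗ[ℂ] X) with hf
  have hkf : FiniteDimensional ℂ (ker f) := hk
  have hcok : FiniteDimensional ℂ (X ⧸ LinearMap.range f) := by
    have := pole_findim_coker f hP hK hR 1 le_rfl
    have hpow1 : LinearMap.range (f ^ 1) = LinearMap.range f := by rw [pow_one]
    rwa [hpow1] at this
  have hidx : finrank ℂ (X ⧸ LinearMap.range f) = finrank ℂ (ker f) :=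
    pole_index_zero f hP hK hR
  have hclosed : IsClosed ((LinearMap.range (S : X →ₗ[ℂ] X) : Submodule ℂ X) : Set X) :=
    closed_range_of_findim_coker S hcok
  exact ⟨⟨hk, hcok, hclosed⟩, hidx.symm⟩

/-- closed range of `S ^ m` for `m ≥ 1` for an operator with finite ascent/descent and
finite-dimensional kernel. -/
lemma pole_range_pow_closed (S : X →L[ℂ] X) (hA : HasFiniteAscent S) (hD : HasFiniteDescent S)
    (hk : FiniteDimensional ℂ (LinearMap.ker (S : X →ₗ[ℂ] X))) (m : ℕ) (hm : 1 ≤ m) :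
    IsClosed ((LinearMap.range ((S ^ m : X →L[ℂ] X) : X →ₗ[ℂ] X) : Submodule ℂ X) : Set X) := by
  obtain ⟨P, hP, hK, hR⟩ := pole_data S hA hD
  set f : X →ₗ[ℂ] X := (S : X →ₗ[ℂ] X) with hf
  have hkf : FiniteDimensional ℂ (ker f) := hk
  have hcok : FiniteDimensional ℂ (X ⧸ LinearMap.range (f ^ m)) :=
    pole_findim_coker f hP hK hR m hm
  have hcok2 : FiniteDimensional ℂ (X ⧸ LinearMap.range ((S ^ m : X →L[ℂ] X) : X →ₗ[ℂ] X)) := by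
    rw [clm_range_pow]; exact hcok
  exact closed_range_of_findim_coker (S ^ m) hcok2

lemma isUnit_of_bij (S : X →L[ℂ] X) (h1 : LinearMap.ker (S : X →ₗ[ℂ] X) = ⊥) (h2 : LinearMap.range (S : X →ₗ[ℂ] X) = ⊤) :
    IsUnit S := by
  set e := ContinuousLinearEquiv.ofBijective S h1 h2 with he
  refine ⟨⟨S, (e.symm : X →L[ℂ] X), ?_, ?_⟩, rfl⟩
  · ext x
    show S ((e.symm : X →L[ℂ] X) x) = x
    have : S ((e.symm : X →L[ℂ] X) x) = e (e.symm x) :=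
      congrFun (ContinuousLinearEquiv.coeFn_ofBijective S h1 h2) (e.symm x)
    rw [this, e.apply_symm_apply]
  · ext x
    show (e.symm : X →L[ℂ] X) (S x) = x
    have : S x = e x := (congrFun (ContinuousLinearEquiv.coeFn_ofBijective S h1 h2) x).symm
    show e.symm (S x) = x
    rw [this, e.symm_apply_apply]

/-- pole of finite rank with trivial kernel gives invertibility. -/
lemma pole_ker_ne_bot (T : X →L[ℂ] X) (l : ℂ) (hl : l ∈ sp T)
    (hA : HasFiniteAscent (T - l • 1)) (hD : HasFiniteDescent (T - l • 1))
    (hk : FiniteDimensional ℂ (LinearMap.ker ((T - l • 1 : X →L[ℂ] X) : X →ₗ[ℂ] X))) :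
    LinearMap.ker ((T - l • 1 : X →L[ℂ] X) : X →ₗ[ℂ] X) ≠ ⊥ := by
  intro hbot
  set S := T - l • 1 with hS
  have hW := weyl_of_pole S hA hD hk
  obtain ⟨⟨-, hcok, -⟩, hidx⟩ := hW
  have h0 : finrank ℂ (LinearMap.ker (S : X →ₗ[ℂ] X)) = 0 := by rw [hbot, finrank_bot]
  have h1 : finrank ℂ (X ⧸ LinearMap.range (S : X →ₗ[ℂ] X)) = 0 := by omega
  have hsub : Subsingleton (X ⧸ LinearMap.range (S : X →ₗ[ℂ] X)) := finrank_zero_iff.mp h1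
  have htop : LinearMap.range (S : X →ₗ[ℂ] X) = ⊤ := Submodule.Quotient.subsingleton_iff.mp hsub
  have hu : IsUnit S := isUnit_of_bij S hbot htop
  have : IsUnit ((algebraMap ℂ (X →L[ℂ] X)) l - T) := by
    have : (algebraMap ℂ (X →L[ℂ] X)) l - T = -S := by
      rw [hS, Algebra.algebraMap_eq_smul_one]; abel
    rw [this]
    exact hu.neg
  exact (spectrum.notMem_iff.mpr this) hl

lemma eig_mem_spa (T : X →L[ℂ] X) (l : ℂ) (x : X) (hx : x ≠ 0)
    (hTx : (T - l • 1) x = 0) : l ∈ spa T := by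
  rintro ⟨c, hc, hall⟩
  have := hall x
  rw [hTx, norm_zero] at this
  have hx0 : 0 < ‖x‖ := norm_pos_iff.mpr hx
  nlinarith

end ZHelper

open ZProps in
theorem stmt11 {X : Type*} [NormedAddCommGroup X] [NormedSpace ℂ X] [CompleteSpace X]
    (hinf : ¬ FiniteDimensional ℂ X) (T : X →L[ℂ] X) :
    PropZPa T ↔ BrowderThm T ∧ leftPoles T = poles0 T := by
  constructor
  · intro hZ
    have hZ' : sp T \ spW T = leftPoles T := hZ
    have heq : leftPoles T = poles0 T := by
      apply Set.Subset.antisymm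
      · intro l hl
        have hsw : l ∈ sp T \ spW T := by rw [hZ']; exact hl
        have hW : IsWeylOp (T - l • 1) := not_not.mp hsw.2
        obtain ⟨hspa, hasc, hcl⟩ := hl
        exact ⟨⟨hsw.1, hasc, ZHelper.weyl_descent _ hW hasc⟩, hW.1.1⟩
      · rintro l ⟨⟨hsp, hasc, hdesc⟩, hk⟩
        have hne : LinearMap.ker ((T - l • 1 : X →L[ℂ] X) : X →ₗ[ℂ] X) ≠ ⊥ := ZHelper.pole_ker_ne_bot T l hsp hasc hdesc hk
        obtain ⟨x, hxker, hx0⟩ := Submodule.exists_mem_ne_zero_of_ne_bot hne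
        refine ⟨ZHelper.eig_mem_spa T l x hx0 (LinearMap.mem_ker.mp hxker), hasc, ?_⟩
        exact ZHelper.pole_range_pow_closed _ hasc hdesc hk _ (by omega)
    refine ⟨?_, heq⟩
    show sp T \ spW T = poles0 T
    rw [hZ', heq]
  · rintro ⟨hB, heq⟩
    show sp T \ spW T = leftPoles T
    rw [heq]
    exact hB
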